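/- Let M be a module over C_n ⋊ ℂS_n. Then the following operators on ℂ[x_1,…,x_n] ⊗ M define a representation of H^c_{A_{n−1}}(u) (namely the induced module from the subalgebra generated by C_n ⋊ ℂS_n and y_1,…,y_n, with each y_i acting on M by zero): each x_i acts by multiplication by x_i in the first factor; w ∈ S_n acts by w·(f ⊗ m) = f^w ⊗ wm; c_i acts by c_i·(f ⊗ m) = f^{τ_i} ⊗ c_i m, where f^{τ_i} is f with x_i replaced by −x_i; and y_i acts by the Dunkl operator y_i·(f ⊗ m) = −u·Σ_{k≠i} ( g_k ⊗ s_{ki} m + h_k ⊗ c_k c_i s_{ki} m ), where g_k, h_k ∈ ℂ[x_1,…,x_n] are the unique polynomials with (x_i − x_k)·g_k = f − f^{s_{ki}} and (x_i + x_k)·h_k = f − f^{s̄_{ki}}; here f^{s_{ki}} is f with x_i and x_k interchanged, and f^{s̄_{ki}} is f with x_i replaced by −x_k and x_k replaced by −x_i. -/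

import Mathlib

set_option linter.unusedSectionVars false


noncomputable section

abbrev SignFn (n : ℕ) := Fin n → ℤˣ

/-- The permutation action on sign functions. -/
def permAut (n : ℕ) : Equiv.Perm (Fin n) →* MulAut (SignFn n) where
  toFun σ :=
    { toFun := fun f => f ∘ σ.symm
      invFun := fun f => f ∘ σ
      left_inv := fun f => by ext k; simp
      right_inv := fun f => by ext k; simp
      map_mul' := fun f g => rfl }
  map_one' := by ext f k; simp [Equiv.Perm.one_def]
  map_mul' := fun σ τ => by
    ext f k
    show (f ((σ * τ).symm k) : ℤ) = f (τ.symm (σ.symm k))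
    rw [Equiv.Perm.mul_def, Equiv.symm_trans_apply]

/-- The hyperoctahedral group `W_{B_n}` of signed permutations, as a semidirect product. -/
abbrev WB (n : ℕ) := SignFn n ⋊[permAut n] Equiv.Perm (Fin n)

/-- the transposition `s_{ij}` in `W_{B_n}`. -/
def sB {n : ℕ} (i j : Fin n) : WB n := ⟨1, Equiv.swap i j⟩

/-- the transposition with sign changes `s̄_{ij}` in `W_{B_n}`. -/
def sbarB {n : ℕ} (i j : Fin n) : WB n :=
  ⟨fun k => if k = i ∨ k = j then -1 else 1, Equiv.swap i j⟩

/-- the sign change `τ_i` at `i` in `W_{B_n}`. -/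
def tauB {n : ℕ} (i : Fin n) : WB n := ⟨fun k => if k = i then -1 else 1, 1⟩

/-- The signed-permutation action of `w ∈ W_{B_n}` on a basis vector `e_i`:
`w(e_i) = (sign) • e_{(index)}`; we record the pair (sign, index). -/
def actB {n : ℕ} (w : WB n) (i : Fin n) : ℂ × Fin n :=
  (((w.left (w.right i) : ℤ) : ℂ), w.right i)

/-- `W_{D_n}` as the subgroup of even signed permutations inside `W_{B_n}`. -/
def WDsub (n : ℕ) : Subgroup (WB n) where
  carrier := {w | ∏ k, w.left k = 1}
  one_mem' := by simp
  mul_mem' := by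
    intro a b ha hb
    simp only [Set.mem_setOf_eq] at *
    have h1 : (a * b).left = a.left * (permAut n a.right) b.left := rfl
    rw [h1]
    rw [show (∏ k, (a.left * (permAut n a.right) b.left) k) = (∏ k, a.left k) * ∏ k, (permAut n a.right) b.left k from Finset.prod_mul_distrib, ha, one_mul]
    calc ∏ k, (permAut n a.right) b.left k = ∏ k, b.left (a.right.symm k) := rfl
      _ = ∏ k, b.left k := Equiv.prod_comp a.right.symm b.left
      _ = 1 := hb
  inv_mem' := by
    intro a ha
    simp only [Set.mem_setOf_eq] at *
    have h1 : (a⁻¹).left = (permAut n a.right⁻¹) a.left⁻¹ := rfl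
    rw [h1]
    calc ∏ k, (permAut n a.right⁻¹) a.left⁻¹ k
        = ∏ k, a.left⁻¹ ((a.right⁻¹).symm k) := rfl
      _ = ∏ k, (a.left k)⁻¹ := Equiv.prod_comp _ _
      _ = (∏ k, a.left k)⁻¹ := by rw [← Finset.prod_inv_distrib]
      _ = 1 := by rw [ha]; simp

lemma sB_mem {n : ℕ} (i j : Fin n) : sB i j ∈ WDsub n := by
  simp [WDsub, sB]

lemma sbarB_mem {n : ℕ} {i j : Fin n} (h : i ≠ j) : sbarB i j ∈ WDsub n := by
  show ∏ k, (if k = i ∨ k = j then (-1 : ℤˣ) else 1) = 1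
  have step : ∀ k, (if k = i ∨ k = j then (-1 : ℤˣ) else 1)
      = (if k = i then -1 else 1) * (if k = j then -1 else 1) := by
    intro k
    by_cases h1 : k = i <;> by_cases h2 : k = j <;> simp_all
  simp_rw [step, Finset.prod_mul_distrib, Finset.prod_ite_eq', Finset.mem_univ, if_true]
  norm_num

/-- the transposition `s_{ij}` as an element of `W_{D_n}`. -/
def sD {n : ℕ} (i j : Fin n) : WDsub n := ⟨sB i j, sB_mem i j⟩

/-- the transposition with sign changes `s̄_{ij}` as an element of `W_{D_n}` (junk value `1`
when `i = j`). -/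
def sbarD {n : ℕ} (i j : Fin n) : WDsub n :=
  if h : i = j then 1 else ⟨sbarB i j, sbarB_mem h⟩

/-- The signed-permutation action for `W_{D_n}`. -/
def actD {n : ℕ} (w : WDsub n) (i : Fin n) : ℂ × Fin n := actB w.1 i

/-- The (trivially signed) permutation action of `S_n`. -/
def actA (n : ℕ) (σ : Equiv.Perm (Fin n)) (i : Fin n) : ℂ × Fin n := (1, σ i)

/-- Generators of a rational double affine Hecke-Clifford algebra:
`x_i`, `y_i`, Clifford generators `c_i`, and group elements `w ∈ W`. -/
inductive HGen (n : ℕ) (G : Type) : Type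
  | x : Fin n → HGen n G
  | y : Fin n → HGen n G
  | c : Fin n → HGen n G
  | g : G → HGen n G

/-- The free algebra on the generators. -/
abbrev HF (n : ℕ) (G : Type) := FreeAlgebra ℂ (HGen n G)

def hX {n : ℕ} {G : Type} (i : Fin n) : HF n G := FreeAlgebra.ι ℂ (HGen.x i)
def hY {n : ℕ} {G : Type} (i : Fin n) : HF n G := FreeAlgebra.ι ℂ (HGen.y i)
def hC {n : ℕ} {G : Type} (i : Fin n) : HF n G := FreeAlgebra.ι ℂ (HGen.c i)
def hG {n : ℕ} {G : Type} (w : G) : HF n G := FreeAlgebra.ι ℂ (HGen.g w)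

/-- The defining relations of a rational double affine Hecke-Clifford algebra, where
`act w i = (sign, index)` records the (signed) permutation action `w(e_i) = sign • e_index`
of the group `W` on the basis vectors, and `R j i` is the prescribed value of the
commutator `[y_j, x_i]`. -/
inductive HRel (n : ℕ) (G : Type) [Group G] (act : G → Fin n → ℂ × Fin n)
    (R : Fin n → Fin n → HF n G) : HF n G → HF n G → Prop
  | cc (i : Fin n) : HRel n G act R (hC i * hC i) 1
  | canti {i j : Fin n} (h : i ≠ j) : HRel n G act R (hC i * hC j) (-(hC j * hC i))
  | xx (i j : Fin n) : HRel n G act R (hX i * hX j) (hX j * hX i)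
  | yy (i j : Fin n) : HRel n G act R (hY i * hY j) (hY j * hY i)
  | yc (i j : Fin n) : HRel n G act R (hY i * hC j) (hC j * hY i)
  | xcs (i : Fin n) : HRel n G act R (hX i * hC i) (-(hC i * hX i))
  | xc {i j : Fin n} (h : i ≠ j) : HRel n G act R (hX i * hC j) (hC j * hX i)
  | gone : HRel n G act R (hG (1 : G)) 1
  | gmul (w w' : G) : HRel n G act R (hG w * hG w') (hG (w * w'))
  | gx (w : G) (i : Fin n) :
      HRel n G act R (hG w * hX i) ((act w i).1 • (hX (act w i).2 * hG w))
  | gy (w : G) (i : Fin n) :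
      HRel n G act R (hG w * hY i) ((act w i).1 • (hY (act w i).2 * hG w))
  | gc (w : G) (i : Fin n) :
      HRel n G act R (hG w * hC i) ((act w i).1 • (hC (act w i).2 * hG w))
  | yx (j i : Fin n) : HRel n G act R (hY j * hX i) (hX i * hY j + R j i)

/-- A rational double affine Hecke-Clifford algebra, presented by generators and relations. -/
abbrev DaHCa (n : ℕ) (G : Type) [Group G] (act : G → Fin n → ℂ × Fin n)
    (R : Fin n → Fin n → HF n G) := RingQuot (HRel n G act R)

variable {n : ℕ} {G : Type} [Group G] {act : G → Fin n → ℂ × Fin n}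
  {R : Fin n → Fin n → HF n G}

def dX (act : G → Fin n → ℂ × Fin n) (R : Fin n → Fin n → HF n G) (i : Fin n) :
    DaHCa n G act R := RingQuot.mkAlgHom ℂ (HRel n G act R) (hX i)
def dY (act : G → Fin n → ℂ × Fin n) (R : Fin n → Fin n → HF n G) (i : Fin n) :
    DaHCa n G act R := RingQuot.mkAlgHom ℂ (HRel n G act R) (hY i)
def dC (act : G → Fin n → ℂ × Fin n) (R : Fin n → Fin n → HF n G) (i : Fin n) :
    DaHCa n G act R := RingQuot.mkAlgHom ℂ (HRel n G act R) (hC i)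
def dG (act : G → Fin n → ℂ × Fin n) (R : Fin n → Fin n → HF n G) (w : G) :
    DaHCa n G act R := RingQuot.mkAlgHom ℂ (HRel n G act R) (hG w)

/-- The right-hand side of the commutation relations `[y_j, x_i]` in the rational
DaHCa of type `A_{n-1}`:  `[y_j,x_i] = u(1+c_j c_i)s_{ji}` for `i ≠ j` and
`[y_i,x_i] = -u Σ_{k≠i} (1+c_k c_i)s_{ki}`. -/
def RA (n : ℕ) (u : ℂ) (j i : Fin n) : HF n (Equiv.Perm (Fin n)) :=
  if j = i then
    -(u • ∑ k ∈ Finset.univ.erase i, (1 + hC k * hC i) * hG (Equiv.swap k i))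
  else
    u • ((1 + hC j * hC i) * hG (Equiv.swap j i))

/-- The rational double affine Hecke-Clifford algebra of type `A_{n-1}`. -/
abbrev HCA (n : ℕ) (u : ℂ) := DaHCa n (Equiv.Perm (Fin n)) (actA n) (RA n u)

def xA {n : ℕ} {u : ℂ} (i : Fin n) : HCA n u := dX (actA n) (RA n u) i
def yA {n : ℕ} {u : ℂ} (i : Fin n) : HCA n u := dY (actA n) (RA n u) i
def cA {n : ℕ} {u : ℂ} (i : Fin n) : HCA n u := dC (actA n) (RA n u) i
def gA {n : ℕ} {u : ℂ} (w : Equiv.Perm (Fin n)) : HCA n u := dG (actA n) (RA n u) w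

/-- Generators of the smash product `C_n ⋊ ℂW`: Clifford generators `c_i` and
group elements `w ∈ W`. -/
inductive KGen (n : ℕ) (G : Type) : Type
  | c : Fin n → KGen n G
  | g : G → KGen n G

abbrev KF (n : ℕ) (G : Type) := FreeAlgebra ℂ (KGen n G)

def kfC {n : ℕ} {G : Type} (i : Fin n) : KF n G := FreeAlgebra.ι ℂ (KGen.c i)
def kfG {n : ℕ} {G : Type} (w : G) : KF n G := FreeAlgebra.ι ℂ (KGen.g w)

/-- The defining relations of the smash product `C_n ⋊ ℂW`: the Clifford relations,
the group algebra relations, and `w c_i w^{-1} = w(c_i)` where `w(c_i)` is given by the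
(signed) permutation action `act`. -/
inductive KRel (n : ℕ) (G : Type) [Group G] (act : G → Fin n → ℂ × Fin n) :
    KF n G → KF n G → Prop
  | cc (i : Fin n) : KRel n G act (kfC i * kfC i) 1
  | canti {i j : Fin n} (h : i ≠ j) : KRel n G act (kfC i * kfC j) (-(kfC j * kfC i))
  | gone : KRel n G act (kfG (1 : G)) 1
  | gmul (w w' : G) : KRel n G act (kfG w * kfG w') (kfG (w * w'))
  | gc (w : G) (i : Fin n) :
      KRel n G act (kfG w * kfC i) ((act w i).1 • (kfC (act w i).2 * kfG w))

/-- The smash product `C_n ⋊ ℂW`, presented by generators and relations. -/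
abbrev Smash (n : ℕ) (G : Type) [Group G] (act : G → Fin n → ℂ × Fin n) :=
  RingQuot (KRel n G act)

def kC {n : ℕ} {G : Type} [Group G] (act : G → Fin n → ℂ × Fin n) (i : Fin n) :
    Smash n G act := RingQuot.mkAlgHom ℂ (KRel n G act) (kfC i)
def kG {n : ℕ} {G : Type} [Group G] (act : G → Fin n → ℂ × Fin n) (w : G) :
    Smash n G act := RingQuot.mkAlgHom ℂ (KRel n G act) (kfG w)

open scoped TensorProduct


namespace KW
open MvPolynomial

variable {n : ℕ}

abbrev P (n : ℕ) := MvPolynomial (Fin n) ℂ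

def sw (k i : Fin n) : P n →ₐ[ℂ] P n := rename (Equiv.swap k i)
def tauP (i : Fin n) : P n →ₐ[ℂ] P n := aeval (fun j => if j = i then -X j else X j)
def sbarP (k i : Fin n) : P n →ₐ[ℂ] P n :=
  aeval (fun j => if j = i then -(X k) else if j = k then -(X i) else (X j : P n))

@[simp] lemma sw_X (k i j : Fin n) : sw k i (X j) = X (Equiv.swap k i j) := rename_X _ _
@[simp] lemma tauP_X (i j : Fin n) : tauP i (X j) = if j = i then -X j else X j := aeval_X _ _
@[simp] lemma sbarP_X (k i j : Fin n) :
    sbarP k i (X j) = if j = i then -(X k) else if j = k then -(X i) else X j := aeval_X _ _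

lemma X_sub_ne {k i : Fin n} (h : k ≠ i) : (X i - X k : P n) ≠ 0 := by
  intro h0
  have := congrArg (eval (fun j => if j = i then (1:ℂ) else 0)) h0
  simp [h, if_neg h] at this

lemma X_add_ne {k i : Fin n} (h : k ≠ i) : (X i + X k : P n) ≠ 0 := by
  intro h0
  have := congrArg (eval (fun j => if j = i then (1:ℂ) else 0)) h0
  simp [h, if_neg h] at this

lemma dvd_sub_gen (d : P n) (φ : P n →ₐ[ℂ] P n) (hgen : ∀ j, d ∣ X j - φ (X j)) (f : P n) :
    d ∣ f - φ f := by
  induction f using MvPolynomial.induction_on with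
  | C a => simp [AlgHom.commutes]
  | add p q hp hq => rw [map_add, show p + q - (φ p + φ q) = (p - φ p) + (q - φ q) by ring]
                     exact dvd_add hp hq
  | mul_X p j hp =>
      rw [map_mul, show p * X j - φ p * φ (X j)
        = (p - φ p) * X j + φ p * (X j - φ (X j)) by ring]
      exact dvd_add (hp.mul_right _) ((hgen j).mul_left _)

lemma dvd_sub_sw (k i : Fin n) (f : P n) : (X i - X k : P n) ∣ f - sw k i f := by
  refine dvd_sub_gen _ _ (fun j => ?_) f
  rw [sw_X]
  rcases eq_or_ne j i with rfl | hji
  · simp [Equiv.swap_apply_right]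
  rcases eq_or_ne j k with rfl | hjk
  · rw [Equiv.swap_apply_left, show (X j - X i : P n) = -(X i - X j) by ring]
    exact dvd_neg.2 dvd_rfl
  · rw [Equiv.swap_apply_of_ne_of_ne hjk hji, sub_self]
    exact dvd_zero _

lemma dvd_sub_sbar (k i : Fin n) (f : P n) : (X i + X k : P n) ∣ f - sbarP k i f := by
  refine dvd_sub_gen _ _ (fun j => ?_) f
  rw [sbarP_X]
  rcases eq_or_ne j i with rfl | hji
  · simp
  rcases eq_or_ne j k with rfl | hjk
  · rw [if_neg hji, if_pos rfl, show (X j - - X i : P n) = X i + X j by ring]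
  · rw [if_neg hji, if_neg hjk, sub_self]
    exact dvd_zero _

def quoMap (d : P n) (hd : d ≠ 0) (φ : P n →ₐ[ℂ] P n) (hdvd : ∀ f, d ∣ f - φ f) :
    P n →ₗ[ℂ] P n where
  toFun f := (hdvd f).choose
  map_add' f g := by
    apply mul_left_cancel₀ hd
    rw [mul_add, ← (hdvd f).choose_spec, ← (hdvd g).choose_spec, ← (hdvd (f + g)).choose_spec,
      map_add]
    ring
  map_smul' c f := by
    apply mul_left_cancel₀ hd
    rw [RingHom.id_apply, mul_smul_comm, ← (hdvd f).choose_spec, ← (hdvd (c • f)).choose_spec,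
      map_smul]
    rw [smul_sub]

lemma quoMap_spec (d : P n) (hd : d ≠ 0) (φ : P n →ₐ[ℂ] P n) (hdvd : ∀ f, d ∣ f - φ f) (f : P n) :
    d * quoMap d hd φ hdvd f = f - φ f := ((hdvd f).choose_spec).symm

def Dk (k i : Fin n) : P n →ₗ[ℂ] P n :=
  if h : k = i then 0 else quoMap (X i - X k) (X_sub_ne h) (sw k i) (dvd_sub_sw k i)

def Db (k i : Fin n) : P n →ₗ[ℂ] P n :=
  if h : k = i then 0 else quoMap (X i + X k) (X_add_ne h) (sbarP k i) (dvd_sub_sbar k i)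

lemma Dk_spec {k i : Fin n} (h : k ≠ i) (f : P n) :
    (X i - X k) * Dk k i f = f - sw k i f := by
  rw [Dk, dif_neg h]; exact quoMap_spec _ _ _ _ f

lemma Db_spec {k i : Fin n} (h : k ≠ i) (f : P n) :
    (X i + X k) * Db k i f = f - sbarP k i f := by
  rw [Db, dif_neg h]; exact quoMap_spec _ _ _ _ f

lemma Dk_unique {k i : Fin n} (h : k ≠ i) {f g : P n}
    (hg : (X i - X k) * g = f - sw k i f) : g = Dk k i f :=
  mul_left_cancel₀ (X_sub_ne h) (by rw [Dk_spec h, hg])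

lemma Db_unique {k i : Fin n} (h : k ≠ i) {f g : P n}
    (hg : (X i + X k) * g = f - sbarP k i f) : g = Db k i f :=
  mul_left_cancel₀ (X_add_ne h) (by rw [Db_spec h, hg])


section comps
variable {k i : Fin n} (hk : k ≠ i)

lemma tau_comm (i j : Fin n) : (tauP i).comp (tauP j) = (tauP j).comp (tauP i) := by
  apply MvPolynomial.algHom_ext; intro l
  by_cases h1 : l = i <;> by_cases h2 : l = j <;>
    simp_all [AlgHom.comp_apply, tauP]

lemma tau_tau (i : Fin n) : (tauP i).comp (tauP i) = AlgHom.id ℂ (P n) := by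
  apply MvPolynomial.algHom_ext; intro l
  by_cases h1 : l = i <;> simp_all [AlgHom.comp_apply, tauP]

include hk

omit hk in
lemma sw_sw : (sw k i).comp (sw k i) = AlgHom.id ℂ (P n) := by
  apply MvPolynomial.algHom_ext; intro l
  simp [AlgHom.comp_apply, sw]

lemma tau_sw_comm {j : Fin n} (h1 : j ≠ k) (h2 : j ≠ i) :
    (tauP j).comp (sw k i) = (sw k i).comp (tauP j) := by
  apply MvPolynomial.algHom_ext; intro l
  by_cases e1 : l = i <;> by_cases e2 : l = k <;> by_cases e3 : l = j <;>
    simp_all [AlgHom.comp_apply, tauP, sw, Equiv.swap_apply_def, Ne.symm h1, Ne.symm h2, Ne.symm hk]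

lemma tau_sbar_comm {j : Fin n} (h1 : j ≠ k) (h2 : j ≠ i) :
    (tauP j).comp (sbarP k i) = (sbarP k i).comp (tauP j) := by
  apply MvPolynomial.algHom_ext; intro l
  by_cases e1 : l = i <;> by_cases e2 : l = k <;> by_cases e3 : l = j <;>
    simp_all [AlgHom.comp_apply, tauP, sbarP, Ne.symm h1, Ne.symm h2, Ne.symm hk]

lemma sw_tau_i : (sw k i).comp (tauP i) = (tauP i).comp (sbarP k i) := by
  apply MvPolynomial.algHom_ext; intro l
  by_cases e1 : l = i <;> by_cases e2 : l = k <;>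
    simp_all [AlgHom.comp_apply, tauP, sw, sbarP, Equiv.swap_apply_def, Ne.symm hk]

lemma tau_i_sw : (tauP i).comp (sw k i) = (sbarP k i).comp (tauP i) := by
  apply MvPolynomial.algHom_ext; intro l
  by_cases e1 : l = i <;> by_cases e2 : l = k <;>
    simp_all [AlgHom.comp_apply, tauP, sw, sbarP, Equiv.swap_apply_def, Ne.symm hk]

lemma sw_tau_k : (sw k i).comp (tauP k) = (tauP k).comp (sbarP k i) := by
  apply MvPolynomial.algHom_ext; intro l
  by_cases e1 : l = i <;> by_cases e2 : l = k <;>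
    simp_all [AlgHom.comp_apply, tauP, sw, sbarP, Equiv.swap_apply_def, Ne.symm hk]

lemma tau_k_sw : (tauP k).comp (sw k i) = (sbarP k i).comp (tauP k) := by
  apply MvPolynomial.algHom_ext; intro l
  by_cases e1 : l = i <;> by_cases e2 : l = k <;>
    simp_all [AlgHom.comp_apply, tauP, sw, sbarP, Equiv.swap_apply_def, Ne.symm hk]

lemma sbar_factor : sbarP k i = (tauP k).comp ((tauP i).comp (sw k i)) := by
  apply MvPolynomial.algHom_ext; intro l
  by_cases e1 : l = i <;> by_cases e2 : l = k <;>
    simp_all [AlgHom.comp_apply, tauP, sw, sbarP, Equiv.swap_apply_def, Ne.symm hk]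

end comps

section renames
variable (w : Equiv.Perm (Fin n)) (k i : Fin n)

lemma rename_sw : (rename ⇑w : P n →ₐ[ℂ] P n).comp (sw k i) = (sw (w k) (w i)).comp (rename ⇑w) := by
  apply MvPolynomial.algHom_ext; intro l
  simp only [AlgHom.comp_apply, sw, rename_X]
  rw [show Equiv.swap (w k) (w i) (w l) = w (Equiv.swap k i l) by
    rw [Equiv.swap_apply_apply]; simp]

lemma rename_tau : (rename ⇑w : P n →ₐ[ℂ] P n).comp (tauP i) = (tauP (w i)).comp (rename ⇑w) := by
  apply MvPolynomial.algHom_ext; intro l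
  by_cases e1 : l = i <;> simp_all [AlgHom.comp_apply, tauP]

lemma rename_sbar : (rename ⇑w : P n →ₐ[ℂ] P n).comp (sbarP k i)
    = (sbarP (w k) (w i)).comp (rename ⇑w) := by
  apply MvPolynomial.algHom_ext; intro l
  by_cases e1 : l = i <;> by_cases e2 : l = k <;>
    simp_all [AlgHom.comp_apply, tauP, sbarP]

end renames

end KW

namespace KW
open MvPolynomial

section smash
variable {n : ℕ}

lemma sm_cc (i : Fin n) : kC (actA n) i * kC (actA n) i = 1 := by
  have h := RingQuot.mkAlgHom_rel ℂ (KRel.cc (n := n) (G := Equiv.Perm (Fin n))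
    (act := actA n) i)
  simpa only [kC, map_mul, map_one] using h

lemma sm_canti {i j : Fin n} (h : i ≠ j) :
    kC (actA n) i * kC (actA n) j = -(kC (actA n) j * kC (actA n) i) := by
  have h2 := RingQuot.mkAlgHom_rel ℂ (KRel.canti (n := n) (G := Equiv.Perm (Fin n))
    (act := actA n) h)
  simpa only [kC, map_mul, map_neg] using h2

lemma sm_gone : kG (actA n) (1 : Equiv.Perm (Fin n)) = 1 := by
  have h := RingQuot.mkAlgHom_rel ℂ (KRel.gone (n := n) (G := Equiv.Perm (Fin n))
    (act := actA n))
  simpa only [kG, map_one] using h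

lemma sm_gmul (w w' : Equiv.Perm (Fin n)) :
    kG (actA n) w * kG (actA n) w' = kG (actA n) (w * w') := by
  have h := RingQuot.mkAlgHom_rel ℂ (KRel.gmul (n := n) (G := Equiv.Perm (Fin n))
    (act := actA n) w w')
  simpa only [kG, map_mul] using h

lemma sm_gc (w : Equiv.Perm (Fin n)) (i : Fin n) :
    kG (actA n) w * kC (actA n) i = kC (actA n) (w i) * kG (actA n) w := by
  have h := RingQuot.mkAlgHom_rel ℂ (KRel.gc (n := n) (G := Equiv.Perm (Fin n))
    (act := actA n) w i)
  simpa only [kG, kC, map_mul, map_smul, actA, one_smul] using h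

end smash
end KW

namespace KW
open MvPolynomial
open scoped TensorProduct

section rep
variable {n : ℕ} (u : ℂ) (M : Type) [AddCommGroup M] [Module ℂ M]
  [Module (Smash n (Equiv.Perm (Fin n)) (actA n)) M]
  [IsScalarTower ℂ (Smash n (Equiv.Perm (Fin n)) (actA n)) M]

instance : SMulCommClass (Smash n (Equiv.Perm (Fin n)) (actA n)) ℂ M :=
  ⟨fun a c m => by
    rw [← algebraMap_smul (Smash n (Equiv.Perm (Fin n)) (actA n)) c m,
      ← algebraMap_smul (Smash n (Equiv.Perm (Fin n)) (actA n)) c (a • m),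
      ← mul_smul, ← mul_smul, Algebra.commutes]⟩

/-- action of the smash product on `M` as an algebra of endomorphisms. -/
def κ : Smash n (Equiv.Perm (Fin n)) (actA n) →ₐ[ℂ] Module.End ℂ M :=
  Algebra.lsmul ℂ ℂ M

@[simp] lemma κ_apply (a : Smash n (Equiv.Perm (Fin n)) (actA n)) (m : M) :
    κ M a m = a • m := rfl

def oX (i : Fin n) : Module.End ℂ (P n ⊗[ℂ] M) :=
  TensorProduct.map (LinearMap.mulLeft ℂ (X i)) LinearMap.id

def oG (w : Equiv.Perm (Fin n)) : Module.End ℂ (P n ⊗[ℂ] M) :=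
  TensorProduct.map (rename ⇑w : P n →ₐ[ℂ] P n).toLinearMap (κ M (kG (actA n) w))

def oC (i : Fin n) : Module.End ℂ (P n ⊗[ℂ] M) :=
  TensorProduct.map (tauP i).toLinearMap (κ M (kC (actA n) i))

def oY (i : Fin n) : Module.End ℂ (P n ⊗[ℂ] M) :=
  (-u) • ∑ k ∈ Finset.univ.erase i,
    (TensorProduct.map (Dk k i) (κ M (kG (actA n) (Equiv.swap k i)))
      + TensorProduct.map (Db k i)
          (κ M (kC (actA n) k * kC (actA n) i * kG (actA n) (Equiv.swap k i))))

@[simp] lemma oX_apply (i : Fin n) (f : P n) (m : M) :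
    oX M i (f ⊗ₜ[ℂ] m) = (X i * f) ⊗ₜ[ℂ] m := rfl

@[simp] lemma oG_apply (w : Equiv.Perm (Fin n)) (f : P n) (m : M) :
    oG M w (f ⊗ₜ[ℂ] m) = rename ⇑w f ⊗ₜ[ℂ] (kG (actA n) w • m) := rfl

@[simp] lemma oC_apply (i : Fin n) (f : P n) (m : M) :
    oC M i (f ⊗ₜ[ℂ] m) = tauP i f ⊗ₜ[ℂ] (kC (actA n) i • m) := rfl

lemma oY_apply (i : Fin n) (f : P n) (m : M) :
    oY u M i (f ⊗ₜ[ℂ] m) = (-u) • ∑ k ∈ Finset.univ.erase i,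
      (Dk k i f ⊗ₜ[ℂ] (kG (actA n) (Equiv.swap k i) • m)
        + Db k i f ⊗ₜ[ℂ]
            ((kC (actA n) k * kC (actA n) i * kG (actA n) (Equiv.swap k i)) • m)) := by
  simp only [oY, LinearMap.smul_apply, LinearMap.sum_apply, LinearMap.add_apply,
    TensorProduct.map_tmul, κ_apply]

end rep
end KW

namespace KW
open MvPolynomial

section dlem
variable {n : ℕ} {k i : Fin n} (hk : k ≠ i) (f : P n)

lemma comp_pt {φ ψ φ' ψ' : P n →ₐ[ℂ] P n} (h : φ.comp ψ = φ'.comp ψ') (f : P n) :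
    φ (ψ f) = φ' (ψ' f) := by
  have := DFunLike.congr_fun h f
  simpa only [AlgHom.comp_apply] using this

lemma tau_pt {φ : P n →ₐ[ℂ] P n} (h : φ.comp φ = AlgHom.id ℂ (P n)) (f : P n) :
    φ (φ f) = f := by
  have := DFunLike.congr_fun h f
  simpa only [AlgHom.comp_apply, AlgHom.id_apply] using this

include hk

lemma tau_j_d {j : Fin n} (h1 : j ≠ k) (h2 : j ≠ i) :
    tauP j (X i - X k : P n) = X i - X k := by
  simp [map_sub, Ne.symm h1, Ne.symm h2]

lemma d_tau_j_Dk {j : Fin n} (h1 : j ≠ k) (h2 : j ≠ i) :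
    tauP j (Dk k i f) = Dk k i (tauP j f) :=
  Dk_unique hk (by
    rw [← tau_j_d hk h1 h2, ← map_mul, Dk_spec hk, map_sub,
      comp_pt (tau_sw_comm hk h1 h2) f])

lemma d_tau_j_Db {j : Fin n} (h1 : j ≠ k) (h2 : j ≠ i) :
    tauP j (Db k i f) = Db k i (tauP j f) :=
  Db_unique hk (by
    have hd : tauP j (X i + X k : P n) = X i + X k := by
      simp [map_add, Ne.symm h1, Ne.symm h2]
    rw [← hd, ← map_mul, Db_spec hk, map_sub, comp_pt (tau_sbar_comm hk h1 h2) f])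

lemma d_tau_i_Db : Dk k i (tauP i f) = -(tauP i (Db k i f)) :=
  (Dk_unique hk (by
    have hd : tauP i (X i + X k : P n) = -(X i - X k) := by
      simp [map_add, hk]; ring
    rw [mul_neg, ← neg_mul, ← hd, ← map_mul, Db_spec hk, map_sub,
      comp_pt (sw_tau_i hk) f])).symm

lemma d_tau_i_Dk : Db k i (tauP i f) = -(tauP i (Dk k i f)) :=
  (Db_unique hk (by
    have hd : tauP i (X i - X k : P n) = -(X i + X k) := by
      simp [map_sub, hk]; ring
    rw [mul_neg, ← neg_mul, ← hd, ← map_mul, Dk_spec hk, map_sub,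
      comp_pt (tau_i_sw hk) f])).symm

lemma d_tau_k_Db : Dk k i (tauP k f) = tauP k (Db k i f) :=
  (Dk_unique hk (by
    have hd : tauP k (X i + X k : P n) = X i - X k := by
      simp [map_add, hk, Ne.symm hk]; ring
    rw [← hd, ← map_mul, Db_spec hk, map_sub, comp_pt (sw_tau_k hk) f])).symm

lemma d_tau_k_Dk : Db k i (tauP k f) = tauP k (Dk k i f) :=
  (Db_unique hk (by
    have hd : tauP k (X i - X k : P n) = X i + X k := by
      simp [map_sub, hk, Ne.symm hk]
    rw [← hd, ← map_mul, Dk_spec hk, map_sub, comp_pt (tau_k_sw hk) f])).symm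

lemma d_ren_Dk (w : Equiv.Perm (Fin n)) :
    rename ⇑w (Dk k i f) = Dk (w k) (w i) (rename ⇑w f) :=
  Dk_unique (fun h => hk (w.injective h)) (by
    have hd : (rename ⇑w : P n →ₐ[ℂ] P n) (X i - X k) = X (w i) - X (w k) := by
      simp [map_sub]
    rw [← hd, ← map_mul, Dk_spec hk, map_sub, comp_pt (rename_sw w k i) f])

lemma d_ren_Db (w : Equiv.Perm (Fin n)) :
    rename ⇑w (Db k i f) = Db (w k) (w i) (rename ⇑w f) :=
  Db_unique (fun h => hk (w.injective h)) (by
    have hd : (rename ⇑w : P n →ₐ[ℂ] P n) (X i + X k) = X (w i) + X (w k) := by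
      simp [map_add]
    rw [← hd, ← map_mul, Db_spec hk, map_sub, comp_pt (rename_sbar w k i) f])

lemma d_Dk_one : Dk k i (1 : P n) = 0 :=
  (Dk_unique hk (by simp)).symm

lemma d_Db_one : Db k i (1 : P n) = 0 :=
  (Db_unique hk (by simp)).symm

lemma d_Dk_X (j : Fin n) :
    Dk k i (X j * f) = X j * Dk k i f
      + (if j = i then sw k i f else if j = k then -(sw k i f) else 0) :=
  (Dk_unique hk (by
    rw [map_mul, sw_X]
    rcases eq_or_ne j i with rfl | h1
    · rw [if_pos rfl, Equiv.swap_apply_right]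
      linear_combination (X j : P n) * Dk_spec hk f
    rcases eq_or_ne j k with rfl | h2
    · rw [if_neg h1, if_pos rfl, Equiv.swap_apply_left]
      linear_combination (X j : P n) * Dk_spec hk f
    · rw [if_neg h1, if_neg h2, Equiv.swap_apply_of_ne_of_ne h2 h1]
      linear_combination (X j : P n) * Dk_spec hk f)).symm

lemma d_Db_X (j : Fin n) :
    Db k i (X j * f) = X j * Db k i f
      + (if j = i ∨ j = k then sbarP k i f else 0) :=
  (Db_unique hk (by
    rw [map_mul, sbarP_X]
    rcases eq_or_ne j i with rfl | h1
    · rw [if_pos (Or.inl rfl), if_pos rfl]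
      linear_combination (X j : P n) * Db_spec hk f
    rcases eq_or_ne j k with rfl | h2
    · rw [if_pos (Or.inr rfl), if_neg h1, if_pos rfl]
      linear_combination (X j : P n) * Db_spec hk f
    · rw [if_neg (by tauto), if_neg h1, if_neg h2]
      linear_combination (X j : P n) * Db_spec hk f)).symm

end dlem
end KW

namespace KW
open MvPolynomial
open scoped TensorProduct

section rels
variable {n : ℕ} (u : ℂ) (M : Type) [AddCommGroup M] [Module ℂ M]
  [Module (Smash n (Equiv.Perm (Fin n)) (actA n)) M]
  [IsScalarTower ℂ (Smash n (Equiv.Perm (Fin n)) (actA n)) M]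

lemma rel_cc (i : Fin n) : oC M i * oC M i = 1 := by
  apply TensorProduct.ext'
  intro f m
  simp only [Module.End.mul_apply, oC_apply, Module.End.one_apply]
  rw [tau_pt (tau_tau i) f, ← mul_smul, sm_cc, one_smul]

lemma rel_canti {i j : Fin n} (h : i ≠ j) : oC M i * oC M j = -(oC M j * oC M i) := by
  apply TensorProduct.ext'
  intro f m
  simp only [Module.End.mul_apply, oC_apply, LinearMap.neg_apply]
  rw [comp_pt (tau_comm i j) f, ← mul_smul, ← mul_smul, sm_canti h, neg_smul, TensorProduct.tmul_neg]

lemma rel_xx (i j : Fin n) : oX M i * oX M j = oX M j * oX M i := by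
  apply TensorProduct.ext'
  intro f m
  simp only [Module.End.mul_apply, oX_apply]
  ring_nf

lemma rel_xcs (i : Fin n) : oX M i * oC M i = -(oC M i * oX M i) := by
  apply TensorProduct.ext'
  intro f m
  simp only [Module.End.mul_apply, oX_apply, oC_apply, LinearMap.neg_apply]
  rw [map_mul, tauP_X, if_pos rfl, ← TensorProduct.neg_tmul]
  ring_nf

lemma rel_xc {i j : Fin n} (h : i ≠ j) : oX M i * oC M j = oC M j * oX M i := by
  apply TensorProduct.ext'
  intro f m
  simp only [Module.End.mul_apply, oX_apply, oC_apply]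
  rw [map_mul, tauP_X, if_neg h]

lemma rel_gone : oG M (1 : Equiv.Perm (Fin n)) = 1 := by
  apply TensorProduct.ext'
  intro f m
  simp only [oG_apply, Module.End.one_apply, Equiv.Perm.coe_one, rename_id, AlgHom.id_apply]
  rw [sm_gone, one_smul]

lemma rel_gmul (w w' : Equiv.Perm (Fin n)) : oG M w * oG M w' = oG M (w * w') := by
  apply TensorProduct.ext'
  intro f m
  simp only [Module.End.mul_apply, oG_apply]
  rw [rename_rename, ← mul_smul, sm_gmul]
  rfl

lemma rel_gx (w : Equiv.Perm (Fin n)) (i : Fin n) : oG M w * oX M i = oX M (w i) * oG M w := by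
  apply TensorProduct.ext'
  intro f m
  simp only [Module.End.mul_apply, oG_apply, oX_apply]
  rw [map_mul, rename_X]

lemma rel_gc (w : Equiv.Perm (Fin n)) (i : Fin n) : oG M w * oC M i = oC M (w i) * oG M w := by
  apply TensorProduct.ext'
  intro f m
  simp only [Module.End.mul_apply, oG_apply, oC_apply]
  rw [comp_pt (rename_tau w i) f, ← mul_smul, ← mul_smul, sm_gc]

end rels
end KW

namespace KW
open MvPolynomial
open scoped TensorProduct

section smash2
variable {n : ℕ}

local notation "cc" => kC (actA n)
local notation "gg" => kG (actA n)

lemma smash_mul_neg (a b : Smash n (Equiv.Perm (Fin n)) (actA n)) : a * -b = -(a * b) :=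
  mul_neg a b

lemma smash_neg_mul (a b : Smash n (Equiv.Perm (Fin n)) (actA n)) : -a * b = -(a * b) :=
  neg_mul a b

lemma smash_neg_neg (a : Smash n (Equiv.Perm (Fin n)) (actA n)) : - -a = a := neg_neg a

lemma sm_gswap (w : Equiv.Perm (Fin n)) (k i : Fin n) :
    gg w * gg (Equiv.swap k i) = gg (Equiv.swap (w k) (w i)) * gg w := by
  rw [sm_gmul, sm_gmul]
  congr 1
  rw [Equiv.swap_apply_apply]
  group

lemma sm_gcc (w : Equiv.Perm (Fin n)) (k i : Fin n) :
    gg w * (cc k * cc i * gg (Equiv.swap k i))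
      = cc (w k) * cc (w i) * gg (Equiv.swap (w k) (w i)) * gg w := by
  calc gg w * (cc k * cc i * gg (Equiv.swap k i))
      = ((gg w * cc k) * cc i) * gg (Equiv.swap k i) := by
        rw [← mul_assoc, ← mul_assoc]
    _ = ((cc (w k) * (gg w * cc i)) * gg (Equiv.swap k i)) := by
        rw [sm_gc, mul_assoc (cc (w k))]
    _ = ((cc (w k) * (cc (w i) * gg w)) * gg (Equiv.swap k i)) := by rw [sm_gc]
    _ = (cc (w k) * cc (w i)) * (gg w * gg (Equiv.swap k i)) := by
        rw [← mul_assoc, mul_assoc (cc (w k) * cc (w i))]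
    _ = _ := by rw [sm_gswap, ← mul_assoc]

variable {k i : Fin n} (hki : k ≠ i)

lemma q_g_ci : gg (Equiv.swap k i) * cc i = cc k * gg (Equiv.swap k i) := by
  rw [sm_gc, Equiv.swap_apply_right]

lemma q_g_ck : gg (Equiv.swap k i) * cc k = cc i * gg (Equiv.swap k i) := by
  rw [sm_gc, Equiv.swap_apply_left]

lemma q_g_cj {j : Fin n} (h1 : j ≠ k) (h2 : j ≠ i) :
    gg (Equiv.swap k i) * cc j = cc j * gg (Equiv.swap k i) := by
  rw [sm_gc, Equiv.swap_apply_of_ne_of_ne h1 h2]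

include hki

lemma q_ccg_ci :
    (cc k * cc i * gg (Equiv.swap k i)) * cc i = -(cc i * gg (Equiv.swap k i)) := by
  rw [mul_assoc, q_g_ci,
    show cc k * cc i * (cc k * gg (Equiv.swap k i))
      = (cc k * (cc i * cc k)) * gg (Equiv.swap k i) from by noncomm_ring,
    sm_canti (Ne.symm hki), smash_mul_neg, smash_neg_mul,
    show (cc k * (cc k * cc i)) * gg (Equiv.swap k i)
      = (cc k * cc k) * (cc i * gg (Equiv.swap k i)) from by noncomm_ring,
    sm_cc, one_mul]

lemma q_ci_ccg :
    cc i * (cc k * cc i * gg (Equiv.swap k i)) = -(cc k * gg (Equiv.swap k i)) := by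
  rw [← mul_assoc, ← mul_assoc, sm_canti (Ne.symm hki), smash_neg_mul, smash_neg_mul,
    show ((cc k * cc i) * cc i) * gg (Equiv.swap k i)
      = cc k * ((cc i * cc i) * gg (Equiv.swap k i)) from by noncomm_ring,
    sm_cc, one_mul]

lemma q_ccg_ck :
    (cc k * cc i * gg (Equiv.swap k i)) * cc k = cc k * gg (Equiv.swap k i) := by
  rw [mul_assoc, q_g_ck, ← mul_assoc, mul_assoc (cc k) (cc i) (cc i), sm_cc, mul_one]

lemma q_ck_ccg :
    cc k * (cc k * cc i * gg (Equiv.swap k i)) = cc i * gg (Equiv.swap k i) := by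
  rw [← mul_assoc, ← mul_assoc, sm_cc, one_mul]

lemma q_ccg_cj {j : Fin n} (h1 : j ≠ k) (h2 : j ≠ i) :
    (cc k * cc i * gg (Equiv.swap k i)) * cc j = cc j * (cc k * cc i * gg (Equiv.swap k i)) := by
  rw [mul_assoc, q_g_cj h1 h2,
    show cc k * cc i * (cc j * gg (Equiv.swap k i))
      = (cc k * (cc i * cc j)) * gg (Equiv.swap k i) from by noncomm_ring,
    sm_canti (Ne.symm h2), smash_mul_neg, smash_neg_mul,
    show (cc k * (cc j * cc i)) * gg (Equiv.swap k i)
      = (cc k * cc j) * (cc i * gg (Equiv.swap k i)) from by noncomm_ring,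
    sm_canti (Ne.symm h1), smash_neg_mul, smash_neg_neg,
    show (cc j * cc k) * (cc i * gg (Equiv.swap k i))
      = cc j * (cc k * cc i * gg (Equiv.swap k i)) from by noncomm_ring]

end smash2
end KW

namespace KW
open MvPolynomial
open scoped TensorProduct

section rels2
variable {n : ℕ} (u : ℂ) (M : Type) [AddCommGroup M] [Module ℂ M]
  [Module (Smash n (Equiv.Perm (Fin n)) (actA n)) M]
  [IsScalarTower ℂ (Smash n (Equiv.Perm (Fin n)) (actA n)) M]

lemma rel_gy (w : Equiv.Perm (Fin n)) (i : Fin n) :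
    oG M w * oY u M i = oY u M (w i) * oG M w := by
  apply TensorProduct.ext'
  intro f m
  rw [Module.End.mul_apply, Module.End.mul_apply, oY_apply, map_smul, map_sum, oG_apply,
    oY_apply]
  congr 1
  refine Finset.sum_equiv w (fun k => ?_) (fun k hk => ?_)
  · simp only [Finset.mem_erase, Finset.mem_univ, and_true]
    exact (EmbeddingLike.apply_eq_iff_eq w).symm.not
  · have hki : k ≠ i := (Finset.mem_erase.mp hk).1
    rw [map_add, oG_apply, oG_apply, d_ren_Dk hki, d_ren_Db hki]
    congr 1
    · congr 1
      rw [← mul_smul, ← mul_smul, sm_gswap]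
    · congr 1
      rw [← mul_smul, ← mul_smul, sm_gcc]

lemma rel_yc (i j : Fin n) : oY u M i * oC M j = oC M j * oY u M i := by
  apply TensorProduct.ext'
  intro f m
  rw [Module.End.mul_apply, Module.End.mul_apply, oC_apply, oY_apply, oY_apply, map_smul,
    map_sum]
  congr 1
  refine Finset.sum_congr rfl (fun k hk => ?_)
  have hki : k ≠ i := (Finset.mem_erase.mp hk).1
  rw [map_add, oC_apply, oC_apply]
  rcases eq_or_ne j i with rfl | hji
  · rw [d_tau_i_Db hki f, d_tau_i_Dk hki f]
    rw [← mul_smul, ← mul_smul, ← mul_smul, ← mul_smul, q_g_ci, q_ccg_ci hki, q_ci_ccg hki]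
    simp only [TensorProduct.neg_tmul, TensorProduct.tmul_neg, neg_smul, neg_neg]
    abel
  rcases eq_or_ne j k with rfl | hjk
  · rw [← d_tau_k_Db hki f, ← d_tau_k_Dk hki f]
    rw [← mul_smul, ← mul_smul, ← mul_smul, ← mul_smul, q_g_ck, q_ccg_ck hki, q_ck_ccg hki]
    abel
  · rw [← d_tau_j_Dk hki f hjk hji, ← d_tau_j_Db hki f hjk hji]
    rw [← mul_smul, ← mul_smul, ← mul_smul, ← mul_smul, q_g_cj hjk hji, q_ccg_cj hki hjk hji]

end rels2
end KW

namespace KW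
open MvPolynomial
open scoped TensorProduct

section rels3
variable {n : ℕ} (u : ℂ) (M : Type) [AddCommGroup M] [Module ℂ M]
  [Module (Smash n (Equiv.Perm (Fin n)) (actA n)) M]
  [IsScalarTower ℂ (Smash n (Equiv.Perm (Fin n)) (actA n)) M]

/-- operator version of the right-hand side `R` of the `[y_j, x_i]` relations. -/
def Rop (j i : Fin n) : Module.End ℂ (P n ⊗[ℂ] M) :=
  if j = i then
    -(u • ∑ k ∈ Finset.univ.erase i, (1 + oC M k * oC M i) * oG M (Equiv.swap k i))
  else u • ((1 + oC M j * oC M i) * oG M (Equiv.swap j i))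

lemma block_apply (k i : Fin n) (hki : k ≠ i) (f : P n) (m : M) :
    ((1 + oC M k * oC M i) * oG M (Equiv.swap k i)) (f ⊗ₜ[ℂ] m)
      = sw k i f ⊗ₜ[ℂ] (kG (actA n) (Equiv.swap k i) • m)
        + sbarP k i f ⊗ₜ[ℂ]
            ((kC (actA n) k * kC (actA n) i * kG (actA n) (Equiv.swap k i)) • m) := by
  rw [Module.End.mul_apply, LinearMap.add_apply, Module.End.one_apply, Module.End.mul_apply,
    oG_apply, oC_apply, oC_apply, ← mul_smul, ← mul_smul]
  have hsb := DFunLike.congr_fun (sbar_factor hki) f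
  simp only [AlgHom.comp_apply] at hsb
  have hswf : (rename ⇑(Equiv.swap k i)) f = sw k i f := rfl
  rw [hswf, ← hsb]

lemma rel_yx (j i : Fin n) : oY u M j * oX M i = oX M i * oY u M j + Rop u M j i := by
  apply TensorProduct.ext'
  intro f m
  rw [Module.End.mul_apply, LinearMap.add_apply, Module.End.mul_apply, oX_apply, oY_apply,
    oY_apply, map_smul, map_sum]
  have hsum : ∀ k ∈ Finset.univ.erase j,
      (Dk k j (X i * f) ⊗ₜ[ℂ] (kG (actA n) (Equiv.swap k j) • m)
        + Db k j (X i * f) ⊗ₜ[ℂ]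
            ((kC (actA n) k * kC (actA n) j * kG (actA n) (Equiv.swap k j)) • m))
      = (oX M i) (Dk k j f ⊗ₜ[ℂ] (kG (actA n) (Equiv.swap k j) • m)
            + Db k j f ⊗ₜ[ℂ]
                ((kC (actA n) k * kC (actA n) j * kG (actA n) (Equiv.swap k j)) • m))
        + ((if i = j then sw k j f else if i = k then -(sw k j f) else 0) ⊗ₜ[ℂ]
              (kG (actA n) (Equiv.swap k j) • m)
            + (if i = j ∨ i = k then sbarP k j f else 0) ⊗ₜ[ℂ]
                ((kC (actA n) k * kC (actA n) j * kG (actA n) (Equiv.swap k j)) • m)) := by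
    intro k hk
    have hkj : k ≠ j := (Finset.mem_erase.mp hk).1
    rw [map_add, oX_apply, oX_apply, d_Dk_X hkj f i, d_Db_X hkj f i,
      TensorProduct.add_tmul, TensorProduct.add_tmul]
    abel
  rw [Finset.sum_congr rfl hsum, Finset.sum_add_distrib, smul_add, ← map_sum, ← map_smul]
  congr 1
  rcases eq_or_ne j i with rfl | hji
  · rw [Rop, if_pos rfl, LinearMap.neg_apply, LinearMap.smul_apply, LinearMap.sum_apply,
      ← neg_smul]
    congr 1
    refine Finset.sum_congr rfl (fun k hk => ?_)
    have hkj : k ≠ j := (Finset.mem_erase.mp hk).1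
    rw [block_apply M k j hkj f m, if_pos rfl, if_pos (Or.inl rfl)]
  · rw [Rop, if_neg hji]
    rw [Finset.sum_eq_single_of_mem i
        (Finset.mem_erase.mpr ⟨Ne.symm hji, Finset.mem_univ i⟩) ?side]
    case side =>
      intro b hb hbi
      rw [if_neg (Ne.symm hji), if_neg (Ne.symm hbi), if_neg (by
        rintro (h | h)
        exacts [hji h.symm, hbi h.symm])]
      rw [TensorProduct.zero_tmul, TensorProduct.zero_tmul, add_zero]
    rw [if_neg (Ne.symm hji), if_pos rfl, if_pos (Or.inr rfl)]
    rw [LinearMap.smul_apply, block_apply M j i hji f m]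
    have hswap : Equiv.swap i j = Equiv.swap j i := Equiv.swap_comm i j
    have hsw : sw i j f = sw j i f := by rw [sw, sw, hswap]
    have hsb : sbarP i j f = sbarP j i f := by
      rw [sbar_factor (Ne.symm hji), sbar_factor hji]
      simp only [AlgHom.comp_apply]
      rw [← comp_pt (tau_comm i j) (sw j i f), hsw]
    have hcc : kC (actA n) i * kC (actA n) j * kG (actA n) (Equiv.swap j i)
        = -(kC (actA n) j * kC (actA n) i * kG (actA n) (Equiv.swap j i)) := by
      rw [sm_canti (Ne.symm hji), smash_neg_mul]
    rw [hsw, hsb, hswap, hcc, neg_smul, neg_smul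
        (kC (actA n) j * kC (actA n) i * kG (actA n) (Equiv.swap j i)) m,
      TensorProduct.tmul_neg, TensorProduct.neg_tmul, ← neg_add, smul_neg, neg_neg]

end rels3
end KW

namespace KW
open MvPolynomial
open scoped TensorProduct

section relyy
variable {n : ℕ} (u : ℂ) (M : Type) [AddCommGroup M] [Module ℂ M]
  [Module (Smash n (Equiv.Perm (Fin n)) (actA n)) M]
  [IsScalarTower ℂ (Smash n (Equiv.Perm (Fin n)) (actA n)) M]

section endlem
variable (c : ℂ) (A B C : Module.End ℂ (P n ⊗[ℂ] M))

lemma end_mul_neg : A * -B = -(A * B) := LinearMap.ext fun z => by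
  simp only [Module.End.mul_apply, LinearMap.neg_apply, map_neg]
lemma end_neg_mul : -A * B = -(A * B) := LinearMap.ext fun z => by
  simp only [Module.End.mul_apply, LinearMap.neg_apply]
lemma end_sub_self : A - A = 0 := sub_self A
lemma end_mul_zero : A * 0 = 0 := mul_zero A
lemma end_smul_zero : c • (0 : Module.End ℂ (P n ⊗[ℂ] M)) = 0 := smul_zero c
lemma end_sum_sub {ι : Type} (s : Finset ι) (f g : ι → Module.End ℂ (P n ⊗[ℂ] M)) :
    ∑ x ∈ s, (f x - g x) = ∑ x ∈ s, f x - ∑ x ∈ s, g x := LinearMap.ext fun z => by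
  simp only [LinearMap.sub_apply, LinearMap.sum_apply]
  rw [Finset.sum_sub_distrib]
lemma end_sum_neg {ι : Type} (s : Finset ι) (f : ι → Module.End ℂ (P n ⊗[ℂ] M)) :
    ∑ x ∈ s, (-f x) = -∑ x ∈ s, f x := LinearMap.ext fun z => by
  simp only [LinearMap.neg_apply, LinearMap.sum_apply]
  rw [Finset.sum_neg_distrib]
lemma end_neg_neg : - -A = A := neg_neg A
lemma end_neg_sub_neg : -A - -B = B - A := neg_sub_neg A B
lemma end_neg_sub : -(A - B) = B - A := neg_sub A B
lemma end_smul_sub : c • (A - B) = c • A - c • B := smul_sub c A B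
lemma end_smul_neg : c • -A = -(c • A) := smul_neg c A
lemma end_mul_sub : A * (B - C) = A * B - A * C := mul_sub A B C

end endlem

lemma end_eq_zero (T : Module.End ℂ (P n ⊗[ℂ] M))
    (h1 : ∀ m : M, T ((1 : P n) ⊗ₜ[ℂ] m) = 0)
    (hx : ∀ (i : Fin n) (z : P n ⊗[ℂ] M), T (oX M i z) = oX M i (T z)) : T = 0 := by
  apply TensorProduct.ext'
  intro f m
  rw [LinearMap.zero_apply]
  induction f using MvPolynomial.induction_on with
  | C a =>
    have hca : (C a : P n) ⊗ₜ[ℂ] m = a • ((1 : P n) ⊗ₜ[ℂ] m) := by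
      rw [TensorProduct.smul_tmul']
      congr 1
      rw [← MvPolynomial.algebraMap_eq, Algebra.algebraMap_eq_smul_one]
    rw [hca, map_smul, h1, smul_zero]
  | add p q hp hq => rw [TensorProduct.add_tmul, map_add, hp, hq, add_zero]
  | mul_X p j hp =>
    have hmx : (p * X j) ⊗ₜ[ℂ] m = oX M j (p ⊗ₜ[ℂ] m) := by rw [oX_apply, mul_comm]
    rw [hmx, hx, hp, map_zero]

lemma oY_one (i : Fin n) (m : M) : oY u M i ((1 : P n) ⊗ₜ[ℂ] m) = 0 := by
  rw [oY_apply]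
  rw [Finset.sum_eq_zero, smul_zero]
  intro k hk
  have hki : k ≠ i := (Finset.mem_erase.mp hk).1
  rw [d_Dk_one hki, d_Db_one hki, TensorProduct.zero_tmul, TensorProduct.zero_tmul, add_zero]

lemma comm_y_block (a j k : Fin n) :
    oY u M a * ((1 + oC M j * oC M k) * oG M (Equiv.swap j k))
      = ((1 + oC M j * oC M k) * oG M (Equiv.swap j k)) * oY u M (Equiv.swap j k a) := by
  have h1 : oY u M a * (1 + oC M j * oC M k) = (1 + oC M j * oC M k) * oY u M a := by
    rw [mul_add, add_mul, mul_one, one_mul, ← mul_assoc, rel_yc, mul_assoc, rel_yc,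
      ← mul_assoc]
  have h2 : oY u M a * oG M (Equiv.swap j k)
      = oG M (Equiv.swap j k) * oY u M (Equiv.swap j k a) := by
    have := rel_gy u M (Equiv.swap j k) (Equiv.swap j k a)
    rw [Equiv.swap_apply_self] at this
    exact this.symm
  calc oY u M a * ((1 + oC M j * oC M k) * oG M (Equiv.swap j k))
      = (oY u M a * (1 + oC M j * oC M k)) * oG M (Equiv.swap j k) := by rw [mul_assoc]
    _ = (1 + oC M j * oC M k) * (oY u M a * oG M (Equiv.swap j k)) := by rw [h1, mul_assoc]
    _ = (1 + oC M j * oC M k) * (oG M (Equiv.swap j k) * oY u M (Equiv.swap j k a)) := by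
        rw [h2]
    _ = _ := by rw [mul_assoc]

lemma comm_y_rop_ne (a : Fin n) {j k : Fin n} (hjk : j ≠ k) :
    oY u M a * Rop u M j k - Rop u M j k * oY u M a
      = u • (((1 + oC M j * oC M k) * oG M (Equiv.swap j k))
          * (oY u M (Equiv.swap j k a) - oY u M a)) := by
  rw [Rop, if_neg hjk, mul_smul_comm, smul_mul_assoc, ← end_smul_sub, comm_y_block,
    ← end_mul_sub]

lemma comm_y_rop_eq (a i : Fin n) :
    oY u M a * Rop u M i i - Rop u M i i * oY u M a
      = -(u • ∑ l ∈ Finset.univ.erase i,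
          (((1 + oC M l * oC M i) * oG M (Equiv.swap l i))
            * (oY u M (Equiv.swap l i a) - oY u M a))) := by
  calc oY u M a * Rop u M i i - Rop u M i i * oY u M a
      = oY u M a * -(u • ∑ l ∈ Finset.univ.erase i,
            (1 + oC M l * oC M i) * oG M (Equiv.swap l i))
          - -(u • ∑ l ∈ Finset.univ.erase i,
            (1 + oC M l * oC M i) * oG M (Equiv.swap l i)) * oY u M a := by
        rw [Rop, if_pos rfl]
    _ = (u • ∑ l ∈ Finset.univ.erase i,
            (1 + oC M l * oC M i) * oG M (Equiv.swap l i)) * oY u M a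
          - oY u M a * (u • ∑ l ∈ Finset.univ.erase i,
            (1 + oC M l * oC M i) * oG M (Equiv.swap l i)) := by
        rw [end_mul_neg, end_neg_mul, end_neg_sub_neg]
    _ = u • ((∑ l ∈ Finset.univ.erase i,
            (1 + oC M l * oC M i) * oG M (Equiv.swap l i)) * oY u M a
          - ∑ l ∈ Finset.univ.erase i,
            oY u M a * ((1 + oC M l * oC M i) * oG M (Equiv.swap l i))) := by
        rw [smul_mul_assoc, mul_smul_comm, end_smul_sub, Finset.mul_sum]
    _ = u • (∑ l ∈ Finset.univ.erase i,
          (((1 + oC M l * oC M i) * oG M (Equiv.swap l i)) * oY u M a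
            - ((1 + oC M l * oC M i) * oG M (Equiv.swap l i))
                * oY u M (Equiv.swap l i a))) := by
        rw [Finset.sum_mul, ← end_sum_sub]
        refine congrArg (fun S => u • S) (Finset.sum_congr rfl fun l _ => ?_)
        rw [comm_y_block]
    _ = u • (∑ l ∈ Finset.univ.erase i,
          -((((1 + oC M l * oC M i) * oG M (Equiv.swap l i)))
            * (oY u M (Equiv.swap l i a) - oY u M a))) := by
        refine congrArg (fun S => u • S) (Finset.sum_congr rfl fun l _ => ?_)
        rw [end_mul_sub, end_neg_sub]
    _ = _ := by rw [end_sum_neg, end_smul_neg]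

lemma rel_yy (i j : Fin n) : oY u M i * oY u M j = oY u M j * oY u M i := by
  rcases eq_or_ne i j with rfl | hij
  · rfl
  have hcomm : ∀ k : Fin n,
      (oY u M i * Rop u M j k - Rop u M j k * oY u M i)
        - (oY u M j * Rop u M i k - Rop u M i k * oY u M j) = 0 := by
    intro k
    rcases eq_or_ne k i with rfl | hki
    · rw [comm_y_rop_ne u M k (Ne.symm hij), comm_y_rop_eq u M j k,
        Finset.sum_eq_single_of_mem j
          (Finset.mem_erase.mpr ⟨Ne.symm hij, Finset.mem_univ j⟩)
          (fun l hl hlj => by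
            rw [Equiv.swap_apply_of_ne_of_ne (Ne.symm hlj) (Ne.symm hij), end_sub_self,
              end_mul_zero]),
        Equiv.swap_apply_right, Equiv.swap_apply_left,
        show (oY u M k - oY u M j) = -(oY u M j - oY u M k) from
          (end_neg_sub M (oY u M j) (oY u M k)).symm,
        end_mul_neg, end_smul_neg, end_neg_neg, end_sub_self]
    rcases eq_or_ne k j with rfl | hkj
    · rw [comm_y_rop_eq u M i k, comm_y_rop_ne u M k hij,
        Finset.sum_eq_single_of_mem i
          (Finset.mem_erase.mpr ⟨hij, Finset.mem_univ i⟩)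
          (fun l hl hli => by
            rw [Equiv.swap_apply_of_ne_of_ne (Ne.symm hli) hij, end_sub_self,
              end_mul_zero]),
        Equiv.swap_apply_left, Equiv.swap_apply_right,
        show (oY u M k - oY u M i) = -(oY u M i - oY u M k) from
          (end_neg_sub M (oY u M i) (oY u M k)).symm,
        end_mul_neg, end_smul_neg, end_neg_neg, end_sub_self]
    · rw [comm_y_rop_ne u M i (Ne.symm hkj), comm_y_rop_ne u M j (Ne.symm hki),
        Equiv.swap_apply_of_ne_of_ne hij (Ne.symm hki),
        Equiv.swap_apply_of_ne_of_ne (Ne.symm hij) (Ne.symm hkj),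
        end_sub_self, end_sub_self, end_mul_zero, end_mul_zero, end_smul_zero,
        end_sub_self]
  have hkey : ∀ k : Fin n,
      (oY u M i * oY u M j - oY u M j * oY u M i) * oX M k
        = oX M k * (oY u M i * oY u M j - oY u M j * oY u M i) := by
    intro k
    have e1z : ∀ w : P n ⊗[ℂ] M,
        oY u M j (oX M k w) = oX M k (oY u M j w) + Rop u M j k w := fun w => by
      have := DFunLike.congr_fun (rel_yx u M j k) w
      simpa only [Module.End.mul_apply, LinearMap.add_apply] using this
    have e2z : ∀ w : P n ⊗[ℂ] M,
        oY u M i (oX M k w) = oX M k (oY u M i w) + Rop u M i k w := fun w => by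
      have := DFunLike.congr_fun (rel_yx u M i k) w
      simpa only [Module.End.mul_apply, LinearMap.add_apply] using this
    refine LinearMap.ext fun z => ?_
    have hcz := DFunLike.congr_fun (hcomm k) z
    simp only [LinearMap.sub_apply, Module.End.mul_apply, LinearMap.zero_apply] at hcz
    simp only [Module.End.mul_apply, LinearMap.sub_apply]
    rw [e1z z, e2z z, map_add, map_add, e2z (oY u M j z), e1z (oY u M i z), map_sub]
    rw [← sub_eq_zero, ← hcz]
    abel
  have hT : oY u M i * oY u M j - oY u M j * oY u M i = 0 := by
    apply end_eq_zero
    · intro m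
      rw [LinearMap.sub_apply, Module.End.mul_apply, Module.End.mul_apply, oY_one, oY_one,
        map_zero, map_zero, sub_self]
    · intro k z
      have := DFunLike.congr_fun (hkey k) z
      simpa only [Module.End.mul_apply] using this
  exact sub_eq_zero.mp hT

end relyy
end KW

namespace KW
open MvPolynomial
open scoped TensorProduct

section assemble
variable {n : ℕ} (u : ℂ) (M : Type) [AddCommGroup M] [Module ℂ M]
  [Module (Smash n (Equiv.Perm (Fin n)) (actA n)) M]
  [IsScalarTower ℂ (Smash n (Equiv.Perm (Fin n)) (actA n)) M]

def gens : HGen n (Equiv.Perm (Fin n)) → Module.End ℂ (P n ⊗[ℂ] M)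
  | HGen.x i => oX M i
  | HGen.y i => oY u M i
  | HGen.c i => oC M i
  | HGen.g w => oG M w

def rho0 : HF n (Equiv.Perm (Fin n)) →ₐ[ℂ] Module.End ℂ (P n ⊗[ℂ] M) :=
  FreeAlgebra.lift ℂ (gens u M)

@[simp] lemma rho0_x (i : Fin n) : rho0 u M (hX i) = oX M i := by
  simp [rho0, hX, gens]
@[simp] lemma rho0_y (i : Fin n) : rho0 u M (hY i) = oY u M i := by
  simp [rho0, hY, gens]
@[simp] lemma rho0_c (i : Fin n) : rho0 u M (hC i) = oC M i := by
  simp [rho0, hC, gens]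
@[simp] lemma rho0_g (w : Equiv.Perm (Fin n)) : rho0 u M (hG w) = oG M w := by
  simp [rho0, hG, gens]

lemma rho0_RA (j i : Fin n) : rho0 u M (RA n u j i) = Rop u M j i := by
  rw [RA, Rop]
  split_ifs with h
  · rw [map_neg, map_smul, map_sum]
    refine congrArg _ (congrArg _ (Finset.sum_congr rfl fun k _ => ?_))
    simp only [map_mul, map_add, map_one, rho0_c, rho0_g]
  · rw [map_smul, map_mul, map_add, map_one, map_mul, rho0_c, rho0_c, rho0_g]

lemma hrel_map : ∀ ⦃a b : HF n (Equiv.Perm (Fin n))⦄,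
    HRel n (Equiv.Perm (Fin n)) (actA n) (RA n u) a b → rho0 u M a = rho0 u M b := by
  intro a b h
  cases h with
  | cc i => simp only [map_mul, map_one, rho0_c]; exact rel_cc M i
  | canti hij => simp only [map_mul, map_neg, rho0_c]; exact rel_canti M hij
  | xx i j => simp only [map_mul, rho0_x]; exact rel_xx M i j
  | yy i j => simp only [map_mul, rho0_y]; exact rel_yy u M i j
  | yc i j => simp only [map_mul, rho0_y, rho0_c]; exact rel_yc u M i j
  | xcs i => simp only [map_mul, map_neg, rho0_x, rho0_c]; exact rel_xcs M i
  | xc hij => simp only [map_mul, rho0_x, rho0_c]; exact rel_xc M hij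
  | gone => simp only [map_one, rho0_g]; exact rel_gone M
  | gmul w w' => simp only [map_mul, rho0_g]; exact rel_gmul M w w'
  | gx w i =>
      simp only [map_mul, map_smul, rho0_g, rho0_x, actA, one_smul]
      exact rel_gx M w i
  | gy w i =>
      simp only [map_mul, map_smul, rho0_g, rho0_y, actA, one_smul]
      exact rel_gy u M w i
  | gc w i =>
      simp only [map_mul, map_smul, rho0_g, rho0_c, actA, one_smul]
      exact rel_gc M w i
  | yx j i =>
      simp only [map_mul, map_add, rho0_y, rho0_x, rho0_RA]
      exact rel_yx u M j i

end assemble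
end KW

namespace KW
open MvPolynomial
open scoped TensorProduct

section final
variable {n : ℕ} (u : ℂ) (M : Type) [AddCommGroup M] [Module ℂ M]
  [Module (Smash n (Equiv.Perm (Fin n)) (actA n)) M]
  [IsScalarTower ℂ (Smash n (Equiv.Perm (Fin n)) (actA n)) M]

def rhoFull : HCA n u →ₐ[ℂ] Module.End ℂ (P n ⊗[ℂ] M) :=
  RingQuot.liftAlgHom ℂ ⟨rho0 u M, fun _ _ h => hrel_map u M h⟩

@[simp] lemma rhoFull_x (i : Fin n) : rhoFull u M (xA i) = oX M i := by
  rw [xA, dX, rhoFull, RingQuot.liftAlgHom_mkAlgHom_apply, rho0_x]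

@[simp] lemma rhoFull_y (i : Fin n) : rhoFull u M (yA i) = oY u M i := by
  rw [yA, dY, rhoFull, RingQuot.liftAlgHom_mkAlgHom_apply, rho0_y]

@[simp] lemma rhoFull_c (i : Fin n) : rhoFull u M (cA i) = oC M i := by
  rw [cA, dC, rhoFull, RingQuot.liftAlgHom_mkAlgHom_apply, rho0_c]

@[simp] lemma rhoFull_g (w : Equiv.Perm (Fin n)) : rhoFull u M (gA w) = oG M w := by
  rw [gA, dG, rhoFull, RingQuot.liftAlgHom_mkAlgHom_apply, rho0_g]

end final
end KW

/-- **Dunkl operator representation of `H^c_{A_{n-1}}(u)` on `ℂ[x] ⊗ M`**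
(Khongsap-Wang, Theorem 3.3).  For `M` a module over `C_n ⋊ ℂS_n`, the operators:
`x_i` = multiplication by `x_i`, `w·(f ⊗ m) = f^w ⊗ wm`, `c_i·(f ⊗ m) = f^{τ_i} ⊗ c_i m`,
and `y_i` = the Dunkl operator
`y_i·(f ⊗ m) = -u Σ_{k≠i} (((f-f^{s_{ki}})/(x_i-x_k)) ⊗ s_{ki}m + ((f-f^{s̄_{ki}})/(x_i+x_k)) ⊗ c_k c_i s_{ki} m)`
define a representation of `H^c_{A_{n-1}}(u)`. -/
theorem dunkl_representation_y_A (n : ℕ) (u : ℂ) (M : Type) [AddCommGroup M] [Module ℂ M]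
    [Module (Smash n (Equiv.Perm (Fin n)) (actA n)) M]
    [IsScalarTower ℂ (Smash n (Equiv.Perm (Fin n)) (actA n)) M] :
    (∀ (f : MvPolynomial (Fin n) ℂ) (i k : Fin n), k ≠ i →
      (∃! g : MvPolynomial (Fin n) ℂ,
        (MvPolynomial.X i - MvPolynomial.X k) * g
          = f - MvPolynomial.rename (Equiv.swap k i) f) ∧
      (∃! h : MvPolynomial (Fin n) ℂ,
        (MvPolynomial.X i + MvPolynomial.X k) * h
          = f - MvPolynomial.aeval
              (fun j => if j = i then -(MvPolynomial.X k) else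
                if j = k then -(MvPolynomial.X i) else (MvPolynomial.X j : MvPolynomial (Fin n) ℂ)) f)) ∧
    ∃ ρ : HCA n u →ₐ[ℂ] Module.End ℂ (MvPolynomial (Fin n) ℂ ⊗[ℂ] M),
      (∀ (i : Fin n) (f : MvPolynomial (Fin n) ℂ) (m : M),
        ρ (xA i) (f ⊗ₜ[ℂ] m) = (MvPolynomial.X i * f) ⊗ₜ[ℂ] m) ∧
      (∀ (w : Equiv.Perm (Fin n)) (f : MvPolynomial (Fin n) ℂ) (m : M),
        ρ (gA w) (f ⊗ₜ[ℂ] m)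
          = (MvPolynomial.rename w f) ⊗ₜ[ℂ] ((kG (actA n) w) • m)) ∧
      (∀ (i : Fin n) (f : MvPolynomial (Fin n) ℂ) (m : M),
        ρ (cA i) (f ⊗ₜ[ℂ] m)
          = (MvPolynomial.aeval
              (fun j => if j = i then -(MvPolynomial.X j) else
                (MvPolynomial.X j : MvPolynomial (Fin n) ℂ)) f) ⊗ₜ[ℂ] ((kC (actA n) i) • m)) ∧
      (∀ (i : Fin n) (f : MvPolynomial (Fin n) ℂ)
          (g h : Fin n → MvPolynomial (Fin n) ℂ) (m : M),
        (∀ k, k ≠ i → (MvPolynomial.X i - MvPolynomial.X k) * g k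
            = f - MvPolynomial.rename (Equiv.swap k i) f) →
        (∀ k, k ≠ i → (MvPolynomial.X i + MvPolynomial.X k) * h k
            = f - MvPolynomial.aeval
                (fun j => if j = i then -(MvPolynomial.X k) else
                  if j = k then -(MvPolynomial.X i) else (MvPolynomial.X j : MvPolynomial (Fin n) ℂ)) f) →
        ρ (yA i) (f ⊗ₜ[ℂ] m)
          = -(u • ∑ k ∈ Finset.univ.erase i,
              ((g k) ⊗ₜ[ℂ] ((kG (actA n) (Equiv.swap k i)) • m)
               + (h k) ⊗ₜ[ℂ]
                  ((kC (actA n) k * kC (actA n) i * kG (actA n) (Equiv.swap k i)) • m)))) := by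
  constructor
  · intro f i k hk
    exact ⟨⟨KW.Dk k i f, KW.Dk_spec hk f, fun g hg => KW.Dk_unique hk hg⟩,
      ⟨KW.Db k i f, KW.Db_spec hk f, fun h hh => KW.Db_unique hk hh⟩⟩
  · refine ⟨KW.rhoFull u M, ?_, ?_, ?_, ?_⟩
    · intro i f m
      rw [KW.rhoFull_x]
      exact KW.oX_apply M i f m
    · intro w f m
      rw [KW.rhoFull_g]
      exact KW.oG_apply M w f m
    · intro i f m
      rw [KW.rhoFull_c]
      exact KW.oC_apply M i f m
    · intro i f g h m hg hh
      have hns : ∀ S : MvPolynomial (Fin n) ℂ ⊗[ℂ] M, (-u) • S = -(u • S) :=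
        fun S => neg_smul u S
      rw [KW.rhoFull_y, KW.oY_apply, hns]
      refine congrArg Neg.neg (congrArg (fun S => u • S)
        (Finset.sum_congr rfl fun k hk => ?_))
      have hki : k ≠ i := (Finset.mem_erase.mp hk).1
      rw [KW.Dk_unique hki (hg k hki), KW.Db_unique hki (hh k hki)]


end
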